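/- Suppose q_z : [0,∞) → ℂ satisfies |q_z(τ)| ≤ M(1+τ)^{−3/2} for all τ ≥ 0. Define, for t ≥ 0, ĝ_t(u) = (i/u) q_z(t + 1/u) for u > 0. Then ∫₀^∞ |ĝ_t(u)|² √u du ≤ M² ∫₀^∞ u^{3/2}/((1+t)u + 1)³ du ≤ C M² (1+t)^{−5/2} for a universal constant C > 0. -/

import Mathlib

open Real MeasureTheory Set

noncomputable def ff (v : ℝ) : ℝ := v ^ ((3:ℝ)/2) / (v + 1) ^ 3

lemma ff_nonneg (v : ℝ) (hv : 0 ≤ v) : 0 ≤ ff v := by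
  unfold ff
  have h1 : (0:ℝ) ≤ v ^ ((3:ℝ)/2) := Real.rpow_nonneg hv _
  have h2 : (0:ℝ) ≤ (v + 1) ^ 3 := by positivity
  exact div_nonneg h1 h2

lemma ff_contOn : ContinuousOn ff (Ioi 0) := by
  apply ContinuousOn.div
  · exact continuousOn_id.rpow_const (fun x _ => Or.inr (by norm_num))
  · fun_prop
  · intro x hx
    have : (0:ℝ) < x := hx
    positivity

lemma ff_integrable : IntegrableOn ff (Ioi 0) := by
  have hmeas : ∀ s ⊆ Ioi (0:ℝ), MeasurableSet s → AEStronglyMeasurable ff (volume.restrict s) := by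
    intro s hs hsm
    exact (ff_contOn.mono hs).aestronglyMeasurable hsm
  have h1 : IntegrableOn ff (Ioc 0 1) := by
    refine Integrable.mono' (integrable_const 1) (hmeas _ Ioc_subset_Ioi_self measurableSet_Ioc) ?_
    filter_upwards [ae_restrict_mem measurableSet_Ioc] with v hv
    have hv0 : (0:ℝ) < v := hv.1
    rw [Real.norm_of_nonneg (ff_nonneg v hv0.le)]
    unfold ff
    have h2 : v ^ ((3:ℝ)/2) ≤ 1 := Real.rpow_le_one hv0.le hv.2 (by norm_num)
    have h3 : (1:ℝ) ≤ (v+1)^3 := one_le_pow₀ (by linarith)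
    calc v ^ ((3:ℝ)/2) / (v + 1) ^ 3 ≤ 1 / 1 :=
          div_le_div₀ zero_le_one h2 one_pos h3
      _ = 1 := by norm_num
  have h2 : IntegrableOn ff (Ioi 1) := by
    refine Integrable.mono' (integrableOn_Ioi_rpow_of_lt (show (-(3:ℝ)/2) < -1 by norm_num) one_pos)
      (hmeas _ (fun x hx => mem_Ioi.2 (lt_trans one_pos (mem_Ioi.1 hx))) measurableSet_Ioi) ?_
    filter_upwards [ae_restrict_mem measurableSet_Ioi] with v hv
    have hv1 : (1:ℝ) < v := hv
    have hv0 : (0:ℝ) < v := lt_trans one_pos hv1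
    rw [Real.norm_of_nonneg (ff_nonneg v hv0.le)]
    unfold ff
    have hden : v ^ 3 ≤ (v + 1) ^ 3 := pow_le_pow_left₀ hv0.le (by linarith) 3
    calc v ^ ((3:ℝ)/2) / (v + 1) ^ 3 ≤ v ^ ((3:ℝ)/2) / v ^ 3 :=
          div_le_div_of_nonneg_left (Real.rpow_nonneg hv0.le _) (by positivity) hden
      _ = v ^ (-(3:ℝ)/2) := by
          rw [← Real.rpow_natCast v 3, ← Real.rpow_sub hv0]
          norm_num
  have : Ioi (0:ℝ) = Ioc 0 1 ∪ Ioi 1 := (Ioc_union_Ioi_eq_Ioi (by norm_num)).symm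
  rw [this]
  exact h1.union h2

lemma ff_scaled (a u : ℝ) (ha : 0 < a) (hu0 : 0 < u) :
    u ^ ((3:ℝ)/2) / (a * u + 1) ^ 3 = a ^ (-(3:ℝ)/2) * ff (a * u) := by
  unfold ff
  rw [Real.mul_rpow ha.le hu0.le, neg_div, Real.rpow_neg ha.le]
  have h1 : a ^ ((3:ℝ)/2) ≠ 0 := by positivity
  field_simp

lemma scaling (a : ℝ) (ha : 0 < a) :
    (∫ u in Ioi (0:ℝ), u ^ ((3:ℝ)/2) / (a * u + 1) ^ 3)
      = a ^ (-(5:ℝ)/2) * ∫ v in Ioi (0:ℝ), ff v := by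
  have step1 : (∫ u in Ioi (0:ℝ), u ^ ((3:ℝ)/2) / (a * u + 1) ^ 3)
      = ∫ u in Ioi (0:ℝ), a ^ (-(3:ℝ)/2) * ff (a * u) := by
    apply setIntegral_congr_fun measurableSet_Ioi
    intro u hu
    exact ff_scaled a u ha hu
  rw [step1, integral_const_mul, integral_comp_mul_left_Ioi ff 0 ha, mul_zero]
  rw [smul_eq_mul, ← mul_assoc]
  congr 1
  rw [← Real.rpow_neg_one a, ← Real.rpow_add ha]
  norm_num

theorem stmt12 : ∃ C > (0:ℝ), ∀ (M : ℝ), 0 ≤ M → ∀ (qz : ℝ → ℂ),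
    (∀ τ : ℝ, 0 ≤ τ → ‖qz τ‖ ≤ M * (1 + τ) ^ (-(3:ℝ)/2)) →
    ∀ t : ℝ, 0 ≤ t →
      (∫ u in Set.Ioi (0:ℝ), ‖(Complex.I / (u : ℂ)) * qz (t + 1 / u)‖ ^ 2 * Real.sqrt u)
        ≤ M ^ 2 * (∫ u in Set.Ioi (0:ℝ), u ^ ((3:ℝ)/2) / ((1 + t) * u + 1) ^ 3)
      ∧ M ^ 2 * (∫ u in Set.Ioi (0:ℝ), u ^ ((3:ℝ)/2) / ((1 + t) * u + 1) ^ 3)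
        ≤ C * M ^ 2 * (1 + t) ^ (-(5:ℝ)/2) := by
  set J : ℝ := ∫ v in Ioi (0:ℝ), ff v with hJ
  have hJ0 : 0 ≤ J := by
    apply setIntegral_nonneg measurableSet_Ioi
    intro v hv
    exact ff_nonneg v (le_of_lt hv)
  refine ⟨J + 1, by linarith, ?_⟩
  intro M hM qz hq t ht
  have ha : (0:ℝ) < 1 + t := by linarith
  have hscale : (∫ u in Ioi (0:ℝ), u ^ ((3:ℝ)/2) / ((1 + t) * u + 1) ^ 3)
      = (1 + t) ^ (-(5:ℝ)/2) * J := scaling (1 + t) ha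
  have hint : IntegrableOn (fun u : ℝ => M ^ 2 * (u ^ ((3:ℝ)/2) / ((1 + t) * u + 1) ^ 3)) (Ioi 0) := by
    apply Integrable.const_mul
    have h0 : IntegrableOn (fun u : ℝ => (1 + t) ^ (-(3:ℝ)/2) * ff ((1 + t) * u)) (Ioi 0) := by
      apply Integrable.const_mul
      have h := (integrableOn_Ioi_comp_mul_left_iff ff 0 ha).2 (by simpa using ff_integrable)
      exact h
    apply h0.congr_fun _ measurableSet_Ioi
    intro u hu
    exact (ff_scaled (1 + t) u ha hu).symm
  constructor
  · rw [← integral_const_mul]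
    apply integral_mono_of_nonneg
    · filter_upwards with u
      positivity
    · exact hint
    · filter_upwards [ae_restrict_mem measurableSet_Ioi] with u hu
      have hu0 : (0:ℝ) < u := hu
      have hτ : (0:ℝ) ≤ t + 1/u := by positivity
      have hb := hq (t + 1/u) hτ
      have hnorm : ‖(Complex.I / (u : ℂ)) * qz (t + 1 / u)‖ = (1/u) * ‖qz (t + 1/u)‖ := by
        rw [norm_mul, norm_div, Complex.norm_I, Complex.norm_real,
            Real.norm_of_nonneg hu0.le]
      have key : ‖(Complex.I / (u : ℂ)) * qz (t + 1 / u)‖ ^ 2 * Real.sqrt u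
          ≤ ((1/u) * (M * (1 + (t + 1/u)) ^ (-(3:ℝ)/2))) ^ 2 * Real.sqrt u := by
        apply mul_le_mul_of_nonneg_right _ (Real.sqrt_nonneg u)
        apply pow_le_pow_left₀ (norm_nonneg _)
        rw [hnorm]
        exact mul_le_mul_of_nonneg_left hb (by positivity)
      refine key.trans (le_of_eq ?_)
      set A : ℝ := (1 + t) * u + 1 with hA
      have hB : (0:ℝ) < A := by positivity
      have hrepr : 1 + (t + 1/u) = A / u := by
        rw [hA]; field_simp; ring
      rw [hrepr]
      have h4 : (A / u) ^ (-(3:ℝ)/2) = u ^ ((3:ℝ)/2) / A ^ ((3:ℝ)/2) := by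
        rw [neg_div, Real.rpow_neg (div_nonneg hB.le hu0.le),
            ← Real.inv_rpow (div_nonneg hB.le hu0.le), inv_div, Real.div_rpow hu0.le hB.le]
      rw [h4]
      have h1 : (u ^ ((3:ℝ)/2))^2 = u^(3:ℕ) := by
        rw [← Real.rpow_natCast (u ^ ((3:ℝ)/2)) 2, ← Real.rpow_mul hu0.le,
            show ((3:ℝ)/2*((2:ℕ):ℝ)) = ((3:ℕ):ℝ) by norm_num, Real.rpow_natCast]
      have h2 : (A ^ ((3:ℝ)/2))^2 = A^(3:ℕ) := by
        rw [← Real.rpow_natCast (A ^ ((3:ℝ)/2)) 2, ← Real.rpow_mul hB.le,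
            show ((3:ℝ)/2*((2:ℕ):ℝ)) = ((3:ℕ):ℝ) by norm_num, Real.rpow_natCast]
      have h3 : u ^ ((3:ℝ)/2) = u * Real.sqrt u := by
        rw [Real.sqrt_eq_rpow, show (3:ℝ)/2 = 1 + 1/2 by norm_num, Real.rpow_add hu0,
            Real.rpow_one]
      rw [mul_pow, mul_pow, div_pow, div_pow, one_pow, h1, h2, h3]
      have hs : Real.sqrt u ≠ 0 := by positivity
      field_simp
  · rw [hscale]
    have heq : M ^ 2 * ((1 + t) ^ (-(5:ℝ)/2) * J) = J * M ^ 2 * (1 + t) ^ (-(5:ℝ)/2) := by ring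
    rw [heq]
    apply mul_le_mul_of_nonneg_right _ (Real.rpow_nonneg ha.le _)
    apply mul_le_mul_of_nonneg_right _ (by positivity)
    linarith
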